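/- Suppose M > 8π and ρ is a smooth solution of the 2D Patlak–Keller–Segel system with mass M, finite initial second moment ∫|x|²ρ₀ dx < ∞, and maximal existence interval [0,T*). Then T* ≤ (2π / (M(M−8π))) ∫_{ℝ²} |x|² ρ₀(x) dx; in particular the solution cannot be global in time. -/

import Mathlib

open MeasureTheory Real

noncomputable section

abbrev E2 := EuclideanSpace ℝ (Fin 2)

/-- Blowup for supercritical mass: if `M > 8π` then the maximal existence time
satisfies `T* ≤ (2π/(M(M−8π))) ∫|x|²ρ₀`. -/
theorem blowup_supercritical_PKS
    (ρ : ℝ → E2 → ℝ) (M Tstar : ℝ)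
    (hM : 8 * π < M) (hT : 0 < Tstar)
    (hnn : ∀ t x, 0 ≤ ρ t x)
    (hmass : ∀ t ∈ Set.Ico (0:ℝ) Tstar, ∫ x : E2, ρ t x = M)
    (hmom : ∀ t ∈ Set.Ico (0:ℝ) Tstar,
      Integrable (fun x : E2 => ‖x‖ ^ 2 * ρ t x))
    (hnnmom : ∀ t ∈ Set.Ico (0:ℝ) Tstar, 0 ≤ ∫ x : E2, ‖x‖ ^ 2 * ρ t x)
    (hvirial : ∀ t ∈ Set.Ico (0:ℝ) Tstar,
      HasDerivAt (fun s => ∫ x : E2, ‖x‖ ^ 2 * ρ s x)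
        (4 * M * (1 - M / (8 * π))) t) :
    Tstar ≤ 2 * π / (M * (M - 8 * π)) * ∫ x : E2, ‖x‖ ^ 2 * ρ 0 x := by
  have hπ : (0:ℝ) < π := Real.pi_pos
  have hM0 : (0:ℝ) < M := lt_trans (by positivity) hM
  have hM8 : (0:ℝ) < M - 8 * π := by linarith
  set c : ℝ := 4 * M * (1 - M / (8 * π)) with hc
  set I : ℝ → ℝ := fun s => ∫ x : E2, ‖x‖ ^ 2 * ρ s x with hIdef
  have hc_neg : c < 0 := by
    have h1 : 1 - M / (8 * π) < 0 := by
      rw [sub_neg, lt_div_iff₀ (by positivity)]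
      linarith
    have := mul_neg_of_pos_of_neg (by linarith : (0:ℝ) < 4 * M) h1
    simpa [hc, mul_assoc] using this
  -- the moment is affine on the existence interval
  have key : ∀ t ∈ Set.Ico (0:ℝ) Tstar, I t = I 0 + c * t := by
    intro t ht
    obtain ⟨ht0, htT⟩ := ht
    have hmem : Set.Icc (0:ℝ) t ⊆ Set.Ico 0 Tstar := fun x hx =>
      ⟨hx.1, lt_of_le_of_lt hx.2 htT⟩
    have hderiv : ∀ x ∈ Set.Icc (0:ℝ) t,
        HasDerivAt (fun s => I s - c * s) 0 x := by
      intro x hx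
      have h := (hvirial x (hmem hx)).sub ((hasDerivAt_id x).const_mul c)
      simpa [hIdef, hc, Pi.sub_def] using h
    have hcont : ContinuousOn (fun s => I s - c * s) (Set.Icc 0 t) :=
      fun x hx => (hderiv x hx).continuousAt.continuousWithinAt
    have hconst := constant_of_has_deriv_right_zero hcont
      (fun x hx => (hderiv x (Set.Ico_subset_Icc_self hx)).hasDerivWithinAt) t
      (Set.right_mem_Icc.2 ht0)
    simp only [mul_zero, sub_zero] at hconst
    linarith [hconst]
  set B : ℝ := 2 * π / (M * (M - 8 * π)) * I 0 with hB
  have hI0 : 0 ≤ I 0 := hnnmom 0 ⟨le_refl 0, hT⟩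
  have hB0 : 0 ≤ B :=
    mul_nonneg (div_nonneg (by positivity) (le_of_lt (mul_pos hM0 hM8))) hI0
  have hcB : c * B = -I 0 := by
    rw [hc, hB]
    field_simp
    ring
  have hbound : ∀ t ∈ Set.Ico (0:ℝ) Tstar, t ≤ B := by
    intro t ht
    have h1 : 0 ≤ I 0 + c * t := (key t ht) ▸ hnnmom t ht
    by_contra h
    push_neg at h
    nlinarith [mul_pos (neg_pos.mpr hc_neg) (sub_pos.mpr h)]
  by_contra h
  push_neg at h
  have htmem : (B + Tstar) / 2 ∈ Set.Ico (0:ℝ) Tstar :=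
    ⟨by linarith, by linarith⟩
  have := hbound _ htmem
  linarith
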